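/- No unnecessary drops: In the abstract linear language λ̂_lin, let ae = infer(e). If ae contains a subterm drop Γ_d ae_s with x ∈ Γ_d, then every well-formed annotated term ae′ (i.e., Γ′ ⊩ ae′ for some multiset context Γ′) with erase(ae′) = e also contains a subterm drop Γ_d′ ae_s′ with x ∈ Γ_d′. -/
import Mathlib


/-!
Formalization of the abstract linear language λ̂_lin from "Type Classes for
Lightweight Substructural Types" (Clamp), §4.1.
-/

namespace LamLin

/-- Unannotated terms: variables, abstractions, multiplicative pairs `⊗`, and
additive choices `&`. -/
inductive ETm : Type
| var : String → ETm
| lam : String → ETm → ETm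
| tens : ETm → ETm → ETm
| amp : ETm → ETm → ETm
deriving DecidableEq

/-- Annotated terms: additionally `dup Γ ae` and `drop Γ ae`, where `Γ` is a
multiset of variables. -/
inductive ATm : Type
| var : String → ATm
| lam : String → ATm → ATm
| tens : ATm → ATm → ATm
| amp : ATm → ATm → ATm
| dup : Multiset String → ATm → ATm
| drop : Multiset String → ATm → ATm

/-- Free variables of an unannotated term. -/
def ETm.fv : ETm → Finset String
| .var x => {x}
| .lam x e => e.fv \ {x}
| .tens a b => a.fv ∪ b.fv
| .amp a b => a.fv ∪ b.fv

/-- Free variables of an annotated term; for `dup Γ ae` and `drop Γ ae` this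
includes the variables of `Γ` together with the free variables of `ae`. -/
def ATm.fv : ATm → Finset String
| .var x => {x}
| .lam x a => a.fv \ {x}
| .tens a b => a.fv ∪ b.fv
| .amp a b => a.fv ∪ b.fv
| .dup Γ a => Γ.toFinset ∪ a.fv
| .drop Γ a => Γ.toFinset ∪ a.fv

/-- Well-formedness `Γ ⊩ ae` of an annotated term in a multiset context. -/
inductive WF : Multiset String → ATm → Prop
| var : WF {x} (.var x)
| lam : x ∉ Γ → WF (Γ + {x}) a → WF Γ (.lam x a)
| tens : WF Γ₁ a → WF Γ₂ b → WF (Γ₁ + Γ₂) (.tens a b)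
| amp : WF Γ a → WF Γ b → WF Γ (.amp a b)
| dup : WF (Γ₁ + Γ₂ + Γ₂) a → WF (Γ₁ + Γ₂) (.dup Γ₂ a)
| drop : WF Γ₁ a → WF (Γ₁ + Γ₂) (.drop Γ₂ a)

/-- The dup/drop inference (elaboration) algorithm. -/
def infer : ETm → ATm
| .var x => .var x
| .lam x e =>
    if x ∈ e.fv then .lam x (infer e) else .lam x (.drop {x} (infer e))
| .tens a b => .dup (a.fv ∩ b.fv).val (.tens (infer a) (infer b))
| .amp a b =>
    .amp (.drop (b.fv \ a.fv).val (infer a)) (.drop (a.fv \ b.fv).val (infer b))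

/-- Erasure of dup/drop annotations. -/
def erase : ATm → ETm
| .var x => .var x
| .lam x a => .lam x (erase a)
| .tens a b => .tens (erase a) (erase b)
| .amp a b => .amp (erase a) (erase b)
| .dup _ a => erase a
| .drop _ a => erase a

/-- `Subterm s t`: `s` occurs as a subterm of the annotated term `t`. -/
inductive Subterm : ATm → ATm → Prop
| refl : Subterm a a
| lam : Subterm s a → Subterm s (.lam x a)
| tensL : Subterm s a → Subterm s (.tens a b)
| tensR : Subterm s b → Subterm s (.tens a b)
| ampL : Subterm s a → Subterm s (.amp a b)
| ampR : Subterm s b → Subterm s (.amp a b)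
| dup : Subterm s a → Subterm s (.dup Γ a)
| drop : Subterm s a → Subterm s (.drop Γ a)

/-- `WFSub Γ ae Γₛ aeₛ`: there is a derivation of `Γ ⊩ ae` containing the
judgment `Γₛ ⊩ aeₛ` as a subderivation. -/
inductive WFSub : Multiset String → ATm → Multiset String → ATm → Prop
| refl : WF Γ a → WFSub Γ a Γ a
| lam : x ∉ Γ → WFSub (Γ + {x}) a Γs as → WFSub Γ (.lam x a) Γs as
| tensL : WFSub Γ₁ a Γs as → WF Γ₂ b → WFSub (Γ₁ + Γ₂) (.tens a b) Γs as
| tensR : WF Γ₁ a → WFSub Γ₂ b Γs as → WFSub (Γ₁ + Γ₂) (.tens a b) Γs as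
| ampL : WFSub Γ a Γs as → WF Γ b → WFSub Γ (.amp a b) Γs as
| ampR : WF Γ a → WFSub Γ b Γs as → WFSub Γ (.amp a b) Γs as
| dup : WFSub (Γ₁ + Γ₂ + Γ₂) a Γs as → WFSub (Γ₁ + Γ₂) (.dup Γ₂ a) Γs as
| drop : WFSub Γ₁ a Γs as → WFSub (Γ₁ + Γ₂) (.drop Γ₂ a) Γs as

end LamLin

namespace LamLin

/-- `P x e`: any well-formed annotation of `e` must drop `x` somewhere. -/
inductive P (x : String) : ETm → Prop
| lamSelf {e} : x ∉ ETm.fv e → P x (.lam x e)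
| lam {y e} : P x e → P x (.lam y e)
| tensL {a b} : P x a → P x (.tens a b)
| tensR {a b} : P x b → P x (.tens a b)
| ampL {a b} : P x a → P x (.amp a b)
| ampR {a b} : P x b → P x (.amp a b)
| ampFvL {a b} : x ∈ ETm.fv b → x ∉ ETm.fv a → P x (.amp a b)
| ampFvR {a b} : x ∈ ETm.fv a → x ∉ ETm.fv b → P x (.amp a b)

/-- No drop containing `x` occurs in `a`. -/
def NoDropX (x : String) (a : ATm) : Prop :=
  ∀ Γd s, Subterm (.drop Γd s) a → x ∉ Γd

theorem subterm_infer_P {x : String} :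
    ∀ {e : ETm} {Γd : Multiset String} {s : ATm},
      Subterm (.drop Γd s) (infer e) → x ∈ Γd → P x e := by
  intro e
  induction e with
  | var y => intro Γd s h _; simp only [infer] at h; cases h
  | lam y e ih =>
      intro Γd s h hx
      simp only [infer] at h
      split at h
      · cases h with
        | lam h' => exact P.lam (ih h' hx)
      · cases h with
        | lam h' =>
          cases h' with
          | refl =>
              have : x = y := by simpa using hx
              subst this
              exact P.lamSelf (by assumption)
          | drop h'' => exact P.lam (ih h'' hx)
  | tens a b iha ihb =>
      intro Γd s h hx
      simp only [infer] at h
      cases h with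
      | dup h' =>
        cases h' with
        | tensL h'' => exact P.tensL (iha h'' hx)
        | tensR h'' => exact P.tensR (ihb h'' hx)
  | amp a b iha ihb =>
      intro Γd s h hx
      simp only [infer] at h
      cases h with
      | ampL h' =>
        cases h' with
        | refl =>
            have : x ∈ ETm.fv b \ ETm.fv a := Finset.mem_val.mp hx
            rw [Finset.mem_sdiff] at this
            exact P.ampFvL this.1 this.2
        | drop h'' => exact P.ampL (iha h'' hx)
      | ampR h' =>
        cases h' with
        | refl =>
            have : x ∈ ETm.fv a \ ETm.fv b := Finset.mem_val.mp hx
            rw [Finset.mem_sdiff] at this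
            exact P.ampFvR this.1 this.2
        | drop h'' => exact P.ampR (ihb h'' hx)

/-- Free variables of the erasure are contained in the context. -/
theorem wf_fv_subset {Γ : Multiset String} {a : ATm} (h : WF Γ a) :
    (erase a).fv ⊆ Γ.toFinset := by
  induction h with
  | var => simp [erase, ETm.fv]
  | lam hx hwf ih =>
      intro y hy
      simp only [erase, ETm.fv, Finset.mem_sdiff, Finset.mem_singleton] at hy
      have := ih hy.1
      simp only [Multiset.toFinset_add, Finset.mem_union, Multiset.mem_toFinset,
        Multiset.mem_singleton] at this
      rcases this with h1 | h1
      · simpa using h1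
      · exact absurd h1 hy.2
  | tens h1 h2 ih1 ih2 =>
      intro y hy
      simp only [erase, ETm.fv, Finset.mem_union] at hy
      simp only [Multiset.toFinset_add, Finset.mem_union]
      rcases hy with hy | hy
      · exact Or.inl (ih1 hy)
      · exact Or.inr (ih2 hy)
  | amp h1 h2 ih1 ih2 =>
      intro y hy
      simp only [erase, ETm.fv, Finset.mem_union] at hy
      rcases hy with hy | hy
      · exact ih1 hy
      · exact ih2 hy
  | dup h ih =>
      intro y hy
      have := ih hy
      simp only [Multiset.toFinset_add, Finset.mem_union] at this ⊢
      tauto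
  | drop h ih =>
      intro y hy
      have := ih hy
      simp only [Multiset.toFinset_add, Finset.mem_union]
      exact Or.inl this

/-- If `a` never drops `x`, then `x` in the context implies `x` free in the
erasure. -/
theorem wf_noDrop_mem_fv {x : String} {Γ : Multiset String} {a : ATm}
    (h : WF Γ a) (hnd : NoDropX x a) (hx : x ∈ Γ) : x ∈ (erase a).fv := by
  induction h with
  | var =>
      simp only [Multiset.mem_singleton] at hx
      subst hx; simp [erase, ETm.fv]
  | @lam Γ y a hy hwf ih =>
      have hnd' : NoDropX x a := fun Γd s hs => hnd Γd s (Subterm.lam hs)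
      have hx' : x ∈ Γ + ({y} : Multiset String) := by
        simp only [Multiset.mem_add]; exact Or.inl hx
      have hmem := ih hnd' hx'
      simp only [erase, ETm.fv, Finset.mem_sdiff, Finset.mem_singleton]
      refine ⟨hmem, ?_⟩
      intro hxy; subst hxy; exact hy hx
  | tens h1 h2 ih1 ih2 =>
      have hnd1 : NoDropX x _ := fun Γd s hs => hnd Γd s (Subterm.tensL hs)
      have hnd2 : NoDropX x _ := fun Γd s hs => hnd Γd s (Subterm.tensR hs)
      simp only [Multiset.mem_add] at hx
      simp only [erase, ETm.fv, Finset.mem_union]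
      rcases hx with hx | hx
      · exact Or.inl (ih1 hnd1 hx)
      · exact Or.inr (ih2 hnd2 hx)
  | amp h1 h2 ih1 ih2 =>
      have hnd1 : NoDropX x _ := fun Γd s hs => hnd Γd s (Subterm.ampL hs)
      simp only [erase, ETm.fv, Finset.mem_union]
      exact Or.inl (ih1 hnd1 hx)
  | dup h ih =>
      have hnd' : NoDropX x _ := fun Γd s hs => hnd Γd s (Subterm.dup hs)
      simp only [Multiset.mem_add] at hx ⊢
      exact ih hnd' (by simp only [Multiset.mem_add]; tauto)
  | @drop Γ₁ a Γ₂ h ih =>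
      have hnd' : NoDropX x _ := fun Γd s hs => hnd Γd s (Subterm.drop hs)
      have hx2 : x ∉ Γ₂ := hnd Γ₂ a Subterm.refl
      simp only [Multiset.mem_add] at hx
      rcases hx with hx | hx
      · exact ih hnd' hx
      · exact absurd hx hx2

theorem P_forces_drop {x : String} {Γ : Multiset String} {a : ATm}
    (h : WF Γ a) (hp : P x (erase a)) :
    ∃ (Γd : Multiset String) (s : ATm), Subterm (.drop Γd s) a ∧ x ∈ Γd := by
  induction h with
  | var => simp only [erase] at hp; cases hp
  | @lam Γ y a hy hwf ih =>
      simp only [erase] at hp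
      cases hp with
      | lamSelf hnf =>
          by_contra hc
          push_neg at hc
          have hnd : NoDropX x a := fun Γd s hs hxd =>
            hc Γd s (Subterm.lam hs) hxd
          have : x ∈ (erase a).fv :=
            wf_noDrop_mem_fv hwf hnd (by simp)
          exact hnf this
      | lam hp' =>
          obtain ⟨Γd, s, hs, hxd⟩ := ih hp'
          exact ⟨Γd, s, Subterm.lam hs, hxd⟩
  | tens h1 h2 ih1 ih2 =>
      simp only [erase] at hp
      cases hp with
      | tensL hp' =>
          obtain ⟨Γd, s, hs, hxd⟩ := ih1 hp'
          exact ⟨Γd, s, Subterm.tensL hs, hxd⟩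
      | tensR hp' =>
          obtain ⟨Γd, s, hs, hxd⟩ := ih2 hp'
          exact ⟨Γd, s, Subterm.tensR hs, hxd⟩
  | @amp Γ a b h1 h2 ih1 ih2 =>
      simp only [erase] at hp
      cases hp with
      | ampL hp' =>
          obtain ⟨Γd, s, hs, hxd⟩ := ih1 hp'
          exact ⟨Γd, s, Subterm.ampL hs, hxd⟩
      | ampR hp' =>
          obtain ⟨Γd, s, hs, hxd⟩ := ih2 hp'
          exact ⟨Γd, s, Subterm.ampR hs, hxd⟩
      | ampFvL hb ha =>
          -- x free in erase b, hence x ∈ Γ; if a never drops x, x free in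
          -- erase a, contradiction.
          by_contra hc
          push_neg at hc
          have hnd : NoDropX x a := fun Γd s hs hxd =>
            hc Γd s (Subterm.ampL hs) hxd
          have hxΓ : x ∈ Γ := by
            have := wf_fv_subset h2 hb
            simpa using this
          exact ha (wf_noDrop_mem_fv h1 hnd hxΓ)
      | ampFvR ha hb =>
          by_contra hc
          push_neg at hc
          have hnd : NoDropX x b := fun Γd s hs hxd =>
            hc Γd s (Subterm.ampR hs) hxd
          have hxΓ : x ∈ Γ := by
            have := wf_fv_subset h1 ha
            simpa using this
          exact hb (wf_noDrop_mem_fv h2 hnd hxΓ)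
  | dup h ih =>
      simp only [erase] at hp
      obtain ⟨Γd, s, hs, hxd⟩ := ih hp
      exact ⟨Γd, s, Subterm.dup hs, hxd⟩
  | drop h ih =>
      simp only [erase] at hp
      obtain ⟨Γd, s, hs, hxd⟩ := ih hp
      exact ⟨Γd, s, Subterm.drop hs, hxd⟩

/-- **No unnecessary drops** (Lemma 11 of the Clamp paper).
Let `ae = infer(e)`. If `ae` contains a subterm `drop Γ_d ae_s` with
`x ∈ Γ_d`, then every well-formed annotated term `ae′` with
`erase(ae′) = e` also contains a subterm `drop Γ_d′ ae_s′` with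
`x ∈ Γ_d′`. -/
theorem no_unnecessary_drops
    {e : ETm} {x : String} {Γd : Multiset String} {aes : ATm}
    (h : Subterm (.drop Γd aes) (infer e)) (hx : x ∈ Γd)
    {ae' : ATm} {Γ' : Multiset String}
    (hwf : WF Γ' ae') (herase : erase ae' = e) :
    ∃ (Γd' : Multiset String) (aes' : ATm),
      Subterm (.drop Γd' aes') ae' ∧ x ∈ Γd' := by
  have hp : P x e := subterm_infer_P h hx
  rw [← herase] at hp
  exact P_forces_drop hwf hp

end LamLin
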